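/- Let f : ℂ → ℂ be analytic at z with f'(z) ≠ 0 and f''(z) ≠ 0. Then the derivative of D f satisfies the identity (D f)'(z) = 2·f'(z)³·S f(z)/f''(z)². Consequently, if f is analytic on a neighborhood of p and f'(w) = (w − p)^m·u(w) with m ≥ 1 and u analytic, u(p) ≠ 0, then D f extends analytically across p and its derivative (D f)' vanishes at p to exact order m; that is, f and D f have the same ramification divisor near p. -/

import Mathlib

open Filter

private lemma analyticAt_deriv' {f : ℂ → ℂ} {x : ℂ} (h : AnalyticAt ℂ f x) :
    AnalyticAt ℂ (deriv f) x := by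
  obtain ⟨s, hs, hfs⟩ := h.exists_mem_nhds_analyticOnNhd
  exact hfs.deriv x (mem_of_mem_nhds hs)

/-- The Schwarzian derivative `S f (z) = f'''(z)/f'(z) − (3/2)·(f''(z)/f'(z))²`. -/
noncomputable def schwarzian (f : ℂ → ℂ) (z : ℂ) : ℂ :=
  deriv (deriv (deriv f)) z / deriv f z - (3 / 2) * (deriv (deriv f) z / deriv f z) ^ 2

/-- Paper's Proposition `Ram(D_z f) = Ram(f)`: the first-derivative identity
`(D f)' = 2·(f')³·(S f)/(f'')²`, and consequently `D f` extends analytically across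
each ramification point of `f`, where its derivative vanishes to the same order. -/
theorem D_ramification
    (f : ℂ → ℂ) :
    (∀ z : ℂ, AnalyticAt ℂ f z → deriv f z ≠ 0 → deriv (deriv f) z ≠ 0 →
      deriv (fun w => f w - 2 * (deriv f w) ^ 2 / deriv (deriv f) w) z
        = 2 * (deriv f z) ^ 3 * schwarzian f z / (deriv (deriv f) z) ^ 2) ∧
    (∀ (p : ℂ) (m : ℕ) (u : ℂ → ℂ), AnalyticAt ℂ f p → 1 ≤ m →
      AnalyticAt ℂ u p → u p ≠ 0 →
      (∀ᶠ w in nhds p, deriv f w = (w - p) ^ m * u w) →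
      ∃ G : ℂ → ℂ, AnalyticAt ℂ G p ∧
        (∀ᶠ w in nhdsWithin p {p}ᶜ,
          G w = f w - 2 * (deriv f w) ^ 2 / deriv (deriv f) w) ∧
        ∃ v : ℂ → ℂ, AnalyticAt ℂ v p ∧ v p ≠ 0 ∧
          ∀ᶠ w in nhds p, deriv G w = (w - p) ^ m * v w) := by
  constructor
  · -- Part 1: the derivative identity
    intro z hf hf1 hf2
    have hd1 : AnalyticAt ℂ (deriv f) z := analyticAt_deriv' hf
    have hd2 : AnalyticAt ℂ (deriv (deriv f)) z := analyticAt_deriv' hd1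
    have H0 : HasDerivAt f (deriv f z) z := hf.differentiableAt.hasDerivAt
    have H1 : HasDerivAt (deriv f) (deriv (deriv f) z) z := hd1.differentiableAt.hasDerivAt
    have H2 : HasDerivAt (deriv (deriv f)) (deriv (deriv (deriv f)) z) z :=
      hd2.differentiableAt.hasDerivAt
    have Hnum : HasDerivAt (fun w => 2 * (deriv f w) ^ 2)
        (2 * (2 * deriv f z * deriv (deriv f) z)) z := by
      simpa [mul_comm, mul_assoc, mul_left_comm] using (H1.pow 2).const_mul (2 : ℂ)
    have Hq := Hnum.div H2 hf2
    have H := H0.sub Hq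
    rw [HasDerivAt.deriv (f := fun w => f w - 2 * (deriv f w) ^ 2 / deriv (deriv f) w) H]
    unfold schwarzian
    have h1 : (deriv (deriv (deriv f)) z / deriv f z -
        3 / 2 * (deriv (deriv f) z / deriv f z) ^ 2)
        = (2 * deriv f z * deriv (deriv (deriv f)) z - 3 * (deriv (deriv f) z) ^ 2)
          / (2 * (deriv f z) ^ 2) := by field_simp
    rw [h1]
    field_simp
    ring
  · -- Part 2: extension across ramification points
    intro p m u hf hm hu hup hev
    obtain ⟨n, rfl⟩ : ∃ n, m = n + 1 := ⟨m - 1, (Nat.succ_pred_eq_of_pos hm).symm⟩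
    set h : ℂ → ℂ := fun w => ((n : ℂ) + 1) * u w + (w - p) * deriv u w with hh_def
    have hu' : AnalyticAt ℂ (deriv u) p := analyticAt_deriv' hu
    have hidp : AnalyticAt ℂ (fun w : ℂ => w - p) p :=
      (analyticAt_id).sub analyticAt_const
    have hh : AnalyticAt ℂ h p :=
      (analyticAt_const.mul hu).add (hidp.mul hu')
    have hhp : h p = ((n : ℂ) + 1) * u p := by simp [hh_def]
    have hn1 : ((n : ℂ) + 1) ≠ 0 := Nat.cast_add_one_ne_zero n
    have hhp0 : h p ≠ 0 := by rw [hhp]; exact mul_ne_zero hn1 hup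
    set φ : ℂ → ℂ := fun w => 2 * (u w) ^ 2 / h w with hφ_def
    have hφ : AnalyticAt ℂ φ p := (analyticAt_const.mul (hu.pow 2)).div hh hhp0
    set G : ℂ → ℂ := fun w => f w - (w - p) ^ (n + 2) * φ w with hG_def
    have hG : AnalyticAt ℂ G p := hf.sub ((hidp.pow _).mul hφ)
    set v : ℂ → ℂ := fun w => u w - ((n : ℂ) + 2) * φ w - (w - p) * deriv φ w with hv_def
    have hv : AnalyticAt ℂ v p :=
      (hu.sub (analyticAt_const.mul hφ)).sub (hidp.mul (analyticAt_deriv' hφ))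
    have hφp : φ p = 2 * (u p) ^ 2 / (((n : ℂ) + 1) * u p) := by
      simp [hφ_def, hhp]
    have hvp : v p ≠ 0 := by
      simp only [hv_def, sub_self, zero_mul, sub_zero, hφp]
      rw [sub_ne_zero]
      intro hc
      rw [mul_div_assoc'] at hc
      rw [eq_div_iff (mul_ne_zero hn1 hup)] at hc
      have h3 : ((n : ℂ) + 3) ≠ 0 := by
        have he : ((n : ℂ) + 3) = ((n + 3 : ℕ) : ℂ) := by push_cast; ring
        rw [he]; exact Nat.cast_ne_zero.mpr (by omega)
      have h0 : u p * (((n : ℂ) + 3) * u p) = 0 := by linear_combination -hc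
      rcases mul_eq_zero.mp h0 with h' | h'
      · exact hup h'
      · rcases mul_eq_zero.mp h' with h'' | h''
        · exact h3 h''
        · exact hup h''
    have hfa : ∀ᶠ w in nhds p, AnalyticAt ℂ f w := hf.eventually_analyticAt
    have hua : ∀ᶠ w in nhds p, AnalyticAt ℂ u w := hu.eventually_analyticAt
    have hφa : ∀ᶠ w in nhds p, AnalyticAt ℂ φ w := hφ.eventually_analyticAt
    have hh0 : ∀ᶠ w in nhds p, h w ≠ 0 := hh.continuousAt.eventually_ne hhp0
    have hev' : deriv f =ᶠ[nhds p] fun w => (w - p) ^ (n + 1) * u w := hev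
    have hdd : deriv (deriv f) =ᶠ[nhds p] deriv (fun w => (w - p) ^ (n + 1) * u w) :=
      hev'.deriv
    have key2 : ∀ᶠ w in nhds p,
        deriv (fun w => (w - p) ^ (n + 1) * u w) w = (w - p) ^ n * h w := by
      filter_upwards [hua] with w hw
      have h1 : HasDerivAt (fun w : ℂ => (w - p) ^ (n + 1))
          (((n : ℂ) + 1) * (w - p) ^ n) w := by
        have hp1 : HasDerivAt (fun x : ℂ => (x - p) ^ (n + 1)) _ w := ((hasDerivAt_id w).sub_const p).pow (n + 1)
        simp only [id_eq, Nat.add_sub_cancel, mul_one] at hp1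
        convert hp1 using 2
        push_cast
        ring
      have h2 := h1.mul hw.differentiableAt.hasDerivAt
      rw [HasDerivAt.deriv (f := fun w => (w - p) ^ (n + 1) * u w) h2]
      simp only [hh_def]
      ring
    refine ⟨G, hG, ?_, v, hv, hvp, ?_⟩
    · have hall := Eventually.filter_mono (nhdsWithin_le_nhds (s := {p}ᶜ)) (hev'.and (hdd.and (key2.and hh0)))
      filter_upwards [hall, self_mem_nhdsWithin] with w hw hwp
      obtain ⟨e1, e2, e3, e4⟩ := hw
      have hwp' : w - p ≠ 0 := sub_ne_zero.mpr hwp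
      rw [e1, e2, e3]
      simp only [hG_def, hφ_def]
      congr 1
      field_simp
      ring
    · filter_upwards [hfa, hφa, hev'] with w hwf hwφ hwe
      have h1 : HasDerivAt (fun w : ℂ => (w - p) ^ (n + 2))
          (((n : ℂ) + 2) * (w - p) ^ (n + 1)) w := by
        have hp2 : HasDerivAt (fun x : ℂ => (x - p) ^ (n + 2)) _ w := ((hasDerivAt_id w).sub_const p).pow (n + 2)
        simp only [id_eq, Nat.add_sub_cancel, show n + 2 - 1 = n + 1 from rfl, mul_one] at hp2
        convert hp2 using 2
        push_cast
        ring
      have h2 := h1.mul hwφ.differentiableAt.hasDerivAt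
      have h0 : HasDerivAt f (deriv f w) w := hwf.differentiableAt.hasDerivAt
      have H := h0.sub h2
      have hDG : deriv G w = deriv f w -
          (((n : ℂ) + 2) * (w - p) ^ (n + 1) * φ w + (w - p) ^ (n + 2) * deriv φ w) :=
        H.deriv
      rw [hDG, hwe]
      simp only [hv_def]
      ring
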